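/- Let N ≥ 1, m ≥ 1, σ > -2, p > m. In the invariant plane {Z = 0}, i.e., for the planar system X' = X(2-(m-1)Y), Y' = -X-(N-2)Y-mY²-((p-m)/(σ+2))XY, the line Y = -X/N is an invariant curve (trajectory) of the system if and only if p = p_F(σ) = m + (σ+2)/N. -/

import Mathlib

/-- For `N ≥ 1`, `m ≥ 1`, `σ > -2`, `p > m`, in the invariant plane `{Z = 0}` the line
`Y = -X/N` is an invariant curve of the planar system
`X' = X(2-(m-1)Y)`, `Y' = -X-(N-2)Y-mY²-((p-m)/(σ+2))XY`
(i.e. the vector field is orthogonal to the normal `(1/N, 1)` at every point of the line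
with `X > 0`) if and only if `p = p_F(σ) = m + (σ+2)/N`. -/
theorem line_invariant_iff_fujita (N : ℕ) (hN : 1 ≤ N) (m σ p : ℝ) (hm : 1 ≤ m)
    (hσ : -2 < σ) (hp : p > m) :
    (∀ X : ℝ, 0 < X →
        (1 / (N : ℝ)) * (X * (2 - (m - 1) * (-X / (N : ℝ))))
          + (-X - ((N : ℝ) - 2) * (-X / (N : ℝ)) - m * (-X / (N : ℝ)) ^ 2
              - ((p - m) / (σ + 2)) * X * (-X / (N : ℝ))) = 0)
      ↔ p = m + (σ + 2) / (N : ℝ) := by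
  have hN0 : (N:ℝ) ≠ 0 := by
    have : (0:ℝ) < N := by exact_mod_cast Nat.pos_of_ne_zero (by omega)
    linarith
  have hσ0 : σ + 2 ≠ 0 := by linarith
  constructor
  · intro h
    have h1 := h 1 one_pos
    field_simp at h1 ⊢
    have h4 : ((N:ℝ))^4 ≠ 0 := pow_ne_zero _ hN0
    have key : (N:ℝ)^4 * ((N:ℝ)*(p-m)-(σ+2)) = 0 := by linear_combination (N:ℝ)^4 * h1
    rcases mul_eq_zero.mp key with h' | h'
    · exact absurd h' h4
    · linear_combination h'
  · intro hpe X hX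
    subst hpe
    field_simp
    ring
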